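/- Fix p_0 ∈ (0,1). Let X(p_0) be the random variable with distribution function F_{p_0}(t) = 0 for t < p_0, F_{p_0}(t) = t for p_0 ≤ t < 1, and F_{p_0}(t) = 1 for t ≥ 1, and let Y be uniformly distributed on (0,1). Then E[X(p_0)] = (p_0^2 + 1)/2 > 1/2 = E[Y], and the hazard rate order X(p_0) ≤_{hr} Y does not hold; in particular, the p_0-tvar-rl order (which holds here, X(p_0) ≤_{p_0-tvar-rl} Y) neither implies the hazard rate order nor preserves expectations. -/

import Mathlib

open MeasureTheory ProbabilityTheory

/-- The quantile (Value at Risk) of a distribution function `F` at level `p`: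
`F^{-1}(p) = inf {x : F x ≥ p}`. -/
noncomputable def quantile (F : ℝ → ℝ) (p : ℝ) : ℝ := sInf {x : ℝ | p ≤ F x}

/-- The distribution function of the residual life `X_t = [X - t ∣ X > t]`:
`F_t(x) = (F(x+t) - F(t))/(1 - F(t))` for `x ≥ 0`, and `0` otherwise. -/
noncomputable def resCDF (F : ℝ → ℝ) (t : ℝ) (x : ℝ) : ℝ :=
  if 0 ≤ x then (F (x + t) - F t) / (1 - F t) else 0

/-- The quantile function of the residual life `X_t`. -/
noncomputable def resQuantile (F : ℝ → ℝ) (t : ℝ) (p : ℝ) : ℝ :=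
  quantile (resCDF F t) p

/-- `X ≤_{p₀-tvar-rl} Y`, expressed through the distribution functions `F` of `X` and `G` of `Y`:
`∫_p^1 F_t^{-1}(u) du ≤ ∫_p^1 G_t^{-1}(u) du` for all `p ∈ [p₀, 1)` and all `t` below the right
endpoints of the supports of `X` and `Y` (equivalently, `F t < 1` and `G t < 1`). -/
def TvarRlLE (F G : ℝ → ℝ) (p₀ : ℝ) : Prop :=
  ∀ t : ℝ, F t < 1 → G t < 1 → ∀ p ∈ Set.Ico p₀ 1,
    (∫ u in p..1, resQuantile F t u) ≤ ∫ u in p..1, resQuantile G t u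

/-- The distribution function of `X(p₀)`: a mixture of a point mass at `p₀` (weight `p₀`) and a
uniform distribution on `(p₀, 1)` (weight `1 - p₀`). -/
noncomputable def Fmix (p₀ : ℝ) (t : ℝ) : ℝ := if t < p₀ then 0 else if t < 1 then t else 1

/-- The distribution function of a uniform random variable on `(0,1)`. -/
noncomputable def Gunif (t : ℝ) : ℝ := if t < 0 then 0 else if t < 1 then t else 1

/-- For `X(p₀)` as above and `Y` uniform on `(0,1)`:
`E[X(p₀)] = (p₀² + 1)/2 > 1/2 = E[Y]` (the means computed as `∫_0^1 F^{-1}(u) du`),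
the hazard rate order `X(p₀) ≤_{hr} Y` fails, yet `X(p₀) ≤_{p₀-tvar-rl} Y` holds; hence the
`p₀-tvar-rl` order neither implies the hazard rate order nor preserves expectations. -/
lemma quantile_eq {H : ℝ → ℝ} {u a : ℝ} (h : {x | u ≤ H x} = Set.Ici a) :
    quantile H u = a := by rw [quantile, h, csInf_Ici]

lemma quantile_gunif (u : ℝ) (hu : 0 < u) (hu1 : u ≤ 1) : quantile Gunif u = u := by
  apply quantile_eq
  ext x
  simp only [Set.mem_setOf_eq, Set.mem_Ici, Gunif]
  split_ifs with h1 h2 <;> constructor <;> intro h <;> linarith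

lemma quantile_fmix {p₀ : ℝ} (hp : 0 < p₀) (hp1 : p₀ < 1) (u : ℝ) (hu : 0 < u) (hu1 : u ≤ 1) :
    quantile (Fmix p₀) u = max p₀ u := by
  apply quantile_eq
  have h1 := le_max_left p₀ u
  have h2 := le_max_right p₀ u
  ext x
  simp only [Set.mem_setOf_eq, Set.mem_Ici, Fmix, max_le_iff]
  split_ifs with g1 g2 <;> constructor <;> intro h
  · linarith
  · linarith [h.1]
  · exact ⟨by linarith, by linarith⟩
  · linarith [h.2]
  · exact ⟨by linarith, by linarith⟩
  · linarith [h.1]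

lemma resQ_G_neg {t u : ℝ} (ht : t < 0) (hu : 0 < u) (hu1 : u ≤ 1) :
    resQuantile Gunif t u = u - t := by
  apply quantile_eq
  ext x
  simp only [Set.mem_setOf_eq, Set.mem_Ici, resCDF, Gunif, if_pos ht, sub_zero, div_one]
  split_ifs with h1 h2 h3 <;> constructor <;> intro h <;> nlinarith

lemma resQ_G_nonneg {t u : ℝ} (ht0 : 0 ≤ t) (ht1 : t < 1) (hu : 0 < u) (hu1 : u ≤ 1) :
    resQuantile Gunif t u = u * (1 - t) := by
  apply quantile_eq
  have h1t : (0:ℝ) < 1 - t := by linarith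
  ext x
  simp only [Set.mem_setOf_eq, Set.mem_Ici, resCDF, Gunif, if_neg (not_lt.2 ht0), if_pos ht1]
  split_ifs with h1 h2 h3 <;> constructor <;> intro h
  · linarith
  · linarith
  · rw [le_div_iff₀ h1t] at h; nlinarith
  · rw [le_div_iff₀ h1t]; nlinarith
  · nlinarith
  · rw [le_div_iff₀ h1t]; nlinarith
  · nlinarith
  · nlinarith

lemma resQ_F_lt {p₀ t u : ℝ} (hp : 0 < p₀) (hp1 : p₀ < 1) (ht : t < p₀)
    (hu : 0 < u) (hu1 : u ≤ 1) :
    resQuantile (Fmix p₀) t u = max p₀ u - t := by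
  apply quantile_eq
  have h1 := le_max_left p₀ u
  have h2 := le_max_right p₀ u
  have h3 : max p₀ u ≤ 1 := max_le hp1.le hu1
  ext x
  simp only [Set.mem_setOf_eq, Set.mem_Ici, resCDF, Fmix, if_pos ht, sub_zero, div_one]
  split_ifs with g1 g2 g3 <;> constructor <;> intro h
  · linarith
  · have : max p₀ u ≤ x + t := by linarith
    linarith [le_trans h1 this]
  · have : max p₀ u ≤ x + t := max_le (by linarith) (by linarith)
    linarith
  · have : max p₀ u ≤ x + t := by linarith
    linarith [le_trans h2 this]
  · linarith
  · linarith
  · linarith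
  · linarith

lemma resQ_F_ge {p₀ t u : ℝ} (hp : 0 < p₀) (ht : p₀ ≤ t) (ht1 : t < 1)
    (hu : 0 < u) (hu1 : u ≤ 1) :
    resQuantile (Fmix p₀) t u = u * (1 - t) := by
  apply quantile_eq
  have h1t : (0:ℝ) < 1 - t := by linarith
  ext x
  simp only [Set.mem_setOf_eq, Set.mem_Ici, resCDF, Fmix, if_neg (not_lt.2 ht), if_pos ht1]
  split_ifs with h1 h2 h3 <;> constructor <;> intro h
  · linarith
  · linarith
  · rw [le_div_iff₀ h1t] at h; nlinarith
  · rw [le_div_iff₀ h1t]; nlinarith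
  · nlinarith
  · rw [le_div_iff₀ h1t]; nlinarith
  · nlinarith
  · nlinarith

theorem stmt9 (p₀ : ℝ) (hp₀ : p₀ ∈ Set.Ioo (0 : ℝ) 1) :
    (∫ u in (0:ℝ)..1, quantile (Fmix p₀) u) = (p₀ ^ 2 + 1) / 2 ∧
    (p₀ ^ 2 + 1) / 2 > 1 / 2 ∧
    (∫ u in (0:ℝ)..1, quantile Gunif u) = 1 / 2 ∧
    ¬ (∀ t : ℝ, Fmix p₀ t < 1 → Gunif t < 1 → ∀ p ∈ Set.Ioo (0 : ℝ) 1,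
        resQuantile (Fmix p₀) t p ≤ resQuantile Gunif t p) ∧
    TvarRlLE (Fmix p₀) Gunif p₀ := by
  obtain ⟨hp0, hp1⟩ := hp₀
  refine ⟨?_, by nlinarith, ?_, ?_, ?_⟩
  · -- mean of Fmix
    have hmaxint : ∀ a b : ℝ, IntervalIntegrable (fun u => max p₀ u) volume a b :=
      fun a b => (continuous_const.max continuous_id).intervalIntegrable a b
    have e1 : (∫ u in (0:ℝ)..1, quantile (Fmix p₀) u) = ∫ u in (0:ℝ)..1, max p₀ u := by
      apply intervalIntegral.integral_congr_ae
      filter_upwards with u hu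
      rw [Set.uIoc_of_le (by norm_num : (0:ℝ) ≤ 1)] at hu
      exact quantile_fmix hp0 hp1 u hu.1 hu.2
    have c1 : (∫ u in (0:ℝ)..p₀, max p₀ u) = ∫ _u in (0:ℝ)..p₀, p₀ :=
      intervalIntegral.integral_congr
        (fun u hu => by rw [Set.uIcc_of_le hp0.le] at hu; exact max_eq_left hu.2)
    have c2 : (∫ u in p₀..(1:ℝ), max p₀ u) = ∫ u in p₀..(1:ℝ), u :=
      intervalIntegral.integral_congr
        (fun u hu => by rw [Set.uIcc_of_le hp1.le] at hu; exact max_eq_right hu.1)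
    rw [e1, ← intervalIntegral.integral_add_adjacent_intervals (hmaxint 0 p₀) (hmaxint p₀ 1),
      c1, c2, intervalIntegral.integral_const, integral_id, smul_eq_mul]
    ring
  · -- mean of Gunif
    have e1 : (∫ u in (0:ℝ)..1, quantile Gunif u) = ∫ u in (0:ℝ)..1, u := by
      apply intervalIntegral.integral_congr_ae
      filter_upwards with u hu
      rw [Set.uIoc_of_le (by norm_num : (0:ℝ) ≤ 1)] at hu
      exact quantile_gunif u hu.1 hu.2
    rw [e1, integral_id]
    norm_num
  · -- hazard rate order fails
    intro h
    have hF0 : Fmix p₀ 0 < 1 := by rw [Fmix, if_pos hp0]; norm_num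
    have hG0 : Gunif 0 < 1 := by rw [Gunif]; norm_num
    have := h 0 hF0 hG0 (p₀ / 2) ⟨by linarith, by linarith⟩
    rw [resQ_F_lt hp0 hp1 hp0 (by linarith) (by linarith),
      resQ_G_nonneg le_rfl one_pos (by linarith) (by linarith),
      max_eq_left (by linarith)] at this
    nlinarith
  · -- tvar-rl order holds
    intro t htF htG p hp
    obtain ⟨hpp, hplt⟩ := hp
    have ht1 : t < 1 := by
      by_contra hc
      push_neg at hc
      rw [Gunif, if_neg (by linarith), if_neg (by linarith)] at htG
      linarith
    have hicc : Set.uIcc p 1 = Set.Icc p 1 := Set.uIcc_of_le hplt.le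
    rcases lt_or_ge t 0 with ht | ht0
    · have hF : Set.EqOn (resQuantile (Fmix p₀) t) (fun u => u - t) (Set.uIcc p 1) := by
        intro u hu; rw [hicc] at hu
        rw [resQ_F_lt hp0 hp1 (by linarith) (by linarith [hu.1]) hu.2,
          max_eq_right (by linarith [hu.1])]
      have hG : Set.EqOn (resQuantile Gunif t) (fun u => u - t) (Set.uIcc p 1) := by
        intro u hu; rw [hicc] at hu
        exact resQ_G_neg ht (by linarith [hu.1]) hu.2
      rw [intervalIntegral.integral_congr hF, intervalIntegral.integral_congr hG]
    · rcases lt_or_ge t p₀ with htp | htp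
      · have hF : Set.EqOn (resQuantile (Fmix p₀) t) (fun u => u - t) (Set.uIcc p 1) := by
          intro u hu; rw [hicc] at hu
          rw [resQ_F_lt hp0 hp1 htp (by linarith [hu.1]) hu.2,
            max_eq_right (by linarith [hu.1])]
        have hG : Set.EqOn (resQuantile Gunif t) (fun u => u * (1 - t)) (Set.uIcc p 1) := by
          intro u hu; rw [hicc] at hu
          exact resQ_G_nonneg ht0 ht1 (by linarith [hu.1]) hu.2
        rw [intervalIntegral.integral_congr hF, intervalIntegral.integral_congr hG]
        apply intervalIntegral.integral_mono_on hplt.le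
          ((continuous_id.sub continuous_const).intervalIntegrable _ _)
          ((continuous_id.mul continuous_const).intervalIntegrable _ _)
        intro u hu
        have h1 := hu.1
        have h2 := hu.2
        simp only [Pi.mul_apply, Pi.sub_apply, id]
        nlinarith [mul_nonneg ht0 (by linarith : (0:ℝ) ≤ 1 - u)]
      · have hF : Set.EqOn (resQuantile (Fmix p₀) t) (fun u => u * (1 - t)) (Set.uIcc p 1) := by
          intro u hu; rw [hicc] at hu
          exact resQ_F_ge hp0 htp ht1 (by linarith [hu.1]) hu.2
        have hG : Set.EqOn (resQuantile Gunif t) (fun u => u * (1 - t)) (Set.uIcc p 1) := by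
          intro u hu; rw [hicc] at hu
          exact resQ_G_nonneg ht0 ht1 (by linarith [hu.1]) hu.2
        rw [intervalIntegral.integral_congr hF, intervalIntegral.integral_congr hG]
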